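/- Let s ∈ ℂ with Re(s) > 1. Let f : ℂ → ℂ be holomorphic and bounded on 𝔻, not identically zero on 𝔻, and let λ ∈ ℂ be such that Σ_{n=1}^∞ (x+n)^{−2s} f(1/(x+n)) = λ f(x) for all x ∈ [0,1], where (x+n)^{−2s} := exp(−2s·log(x+n)) with the real logarithm. Then |λ| < 1. -/

import Mathlib

open Complex

/-- The disc `𝔻 = {z : |z − 2/3| < 1}`. -/
def gaussDisc : Set ℂ := Metric.ball ((2:ℂ)/3) 1

theorem transferOp_spectral_radius_re_gt_one (s : ℂ) (hs : 1 < s.re)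
    (f : ℂ → ℂ)
    (hf_holo : DifferentiableOn ℂ f gaussDisc)
    (hf_bdd : ∃ M : ℝ, ∀ z ∈ gaussDisc, ‖f z‖ ≤ M)
    (hf_ne : ∃ z ∈ gaussDisc, f z ≠ 0)
    (lam : ℂ)
    (heig : ∀ x : ℝ, x ∈ Set.Icc (0:ℝ) 1 →
      ∑' n : ℕ, Complex.exp (-(2 * s) * (Real.log (x + (n : ℕ) + 1) : ℂ))
          * f (1 / ((x : ℂ) + (n : ℕ) + 1))
        = lam * f (x : ℂ)) :
    ‖lam‖ < 1 := by
  have hmem : ∀ x : ℝ, x ∈ Set.Icc (0:ℝ) 1 → (x:ℂ) ∈ gaussDisc := by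
    intro x hx
    have h1 : (x:ℂ) - 2/3 = ((x - 2/3 : ℝ) : ℂ) := by push_cast; ring
    simp only [gaussDisc, Metric.mem_ball, dist_eq_norm, h1, Complex.norm_real,
      Real.norm_eq_abs]
    rw [abs_sub_lt_iff]
    constructor
    · linarith [hx.2]
    · linarith [hx.1]
  -- Step 1 : a point of [0,1] where f does not vanish
  have hx₁ : ∃ x ∈ Set.Icc (0:ℝ) 1, f (x:ℂ) ≠ 0 := by
    by_contra hcon
    push_neg at hcon
    obtain ⟨z, hz, hfz⟩ := hf_ne
    apply hfz
    have hana : AnalyticOnNhd ℂ f gaussDisc := hf_holo.analyticOnNhd Metric.isOpen_ball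
    have hconn : IsPreconnected gaussDisc := (convex_ball _ _).isPreconnected
    have hz₀ : ((1/2:ℝ):ℂ) ∈ gaussDisc := hmem (1/2) (by norm_num)
    have hfreq : ∃ᶠ w in nhdsWithin ((1/2:ℝ):ℂ) {((1/2:ℝ):ℂ)}ᶜ, f w = 0 := by
      have h2 : Filter.Tendsto (fun n : ℕ => ((n:ℝ)+2)) Filter.atTop Filter.atTop :=
        Filter.tendsto_atTop_add_const_right _ 2 tendsto_natCast_atTop_atTop
      have h3 : Filter.Tendsto (fun n : ℕ => ((n:ℝ)+2)⁻¹) Filter.atTop (nhds 0) :=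
        h2.inv_tendsto_atTop
      have h4 : Filter.Tendsto (fun n : ℕ => (1/2 + ((n:ℝ)+2)⁻¹ : ℝ)) Filter.atTop
          (nhds (1/2)) := by
        have := tendsto_const_nhds.add h3 (α := ℕ) (f := fun _ => (1/2:ℝ))
        simpa using this
      have h5 : Filter.Tendsto (fun n : ℕ => (((1/2 + ((n:ℝ)+2)⁻¹ : ℝ)):ℂ)) Filter.atTop
          (nhds ((1/2:ℝ):ℂ)) := (Complex.continuous_ofReal.tendsto _).comp h4
      have h6 : Filter.Tendsto (fun n : ℕ => (((1/2 + ((n:ℝ)+2)⁻¹ : ℝ)):ℂ)) Filter.atTop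
          (nhdsWithin ((1/2:ℝ):ℂ) {((1/2:ℝ):ℂ)}ᶜ) := by
        refine tendsto_nhdsWithin_of_tendsto_nhds_of_eventually_within _ h5 ?_
        refine Filter.Eventually.of_forall (fun n => ?_)
        simp only [Set.mem_compl_iff, Set.mem_singleton_iff]
        intro hbad
        have : (1/2 + ((n:ℝ)+2)⁻¹ : ℝ) = 1/2 := by exact_mod_cast hbad
        have hpos : 0 < ((n:ℝ)+2)⁻¹ := by positivity
        linarith
      refine h6.frequently (Filter.Frequently.of_forall (fun n => ?_))
      refine hcon _ ⟨by positivity, ?_⟩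
      have h7 : ((n:ℝ)+2)⁻¹ ≤ 2⁻¹ := by
        apply inv_anti₀ (by norm_num)
        have : (0:ℝ) ≤ (n:ℝ) := Nat.cast_nonneg n
        linarith
      norm_num at h7 ⊢
      linarith
    exact (hana.eqOn_zero_of_preconnected_of_frequently_eq_zero hconn hz₀ hfreq) hz
  obtain ⟨x₁, hx₁I, hfx₁⟩ := hx₁
  -- Step 2 : maximum of ‖f x‖ (1+x) on [0,1]
  have hcontf : ContinuousOn (fun x:ℝ => ‖f (x:ℂ)‖ * (1+x)) (Set.Icc 0 1) := by
    apply ContinuousOn.mul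
    · exact (hf_holo.continuousOn.comp Complex.continuous_ofReal.continuousOn hmem).norm
    · exact (continuous_const.add continuous_id).continuousOn
  obtain ⟨x₀, hx₀I, hmax⟩ := isCompact_Icc.exists_isMaxOn ⟨0, by norm_num⟩ hcontf
  set R := ‖f (x₀:ℂ)‖ * (1+x₀) with hRdef
  have hx₀0 : (0:ℝ) ≤ x₀ := hx₀I.1
  have hR : 0 < R := by
    have h1 : 0 < ‖f (x₁:ℂ)‖ * (1+x₁) :=
      mul_pos (norm_pos_iff.2 hfx₁) (by linarith [hx₁I.1])
    exact lt_of_lt_of_le h1 (hmax hx₁I)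
  have hfx₀ : 0 < ‖f (x₀:ℂ)‖ := by
    nlinarith [norm_nonneg (f (x₀:ℂ))]
  set p := 2 * s.re with hp
  have hp2 : 2 < p := by simp only [hp]; linarith
  have htpos : ∀ n : ℕ, (0:ℝ) < x₀ + n + 1 := by
    intro n; have : (0:ℝ) ≤ (n:ℝ) := Nat.cast_nonneg n; linarith
  have ht1 : ∀ n : ℕ, (1:ℝ) ≤ x₀ + n + 1 := by
    intro n; have : (0:ℝ) ≤ (n:ℝ) := Nat.cast_nonneg n; linarith
  -- the norms of the terms
  set u : ℕ → ℝ := fun n => (x₀ + (n:ℝ) + 1) ^ (-p) * ‖f (1/((x₀:ℂ) + (n:ℕ) + 1))‖ with hu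
  have hnu : ∀ n : ℕ,
      ‖Complex.exp (-(2 * s) * (Real.log (x₀ + (n:ℕ) + 1) : ℂ))
        * f (1 / ((x₀ : ℂ) + (n:ℕ) + 1))‖ = u n := by
    intro n
    rw [hu, norm_mul]
    congr 1
    rw [Complex.norm_exp]
    have hre : (-(2 * s) * ((Real.log (x₀ + (n:ℝ) + 1) : ℝ):ℂ)).re
        = Real.log (x₀ + (n:ℝ) + 1) * (-p) := by
      simp [Complex.mul_re, hp]
      ring
    rw [hre, ← Real.rpow_def_of_pos (htpos n)]
  -- bound from the max
  have hfb : ∀ n : ℕ, ‖f (1/((x₀:ℂ) + (n:ℕ) + 1))‖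
      ≤ R * (x₀ + (n:ℝ) + 1) / (x₀ + (n:ℝ) + 2) := by
    intro n
    have hyI : (x₀ + (n:ℝ) + 1)⁻¹ ∈ Set.Icc (0:ℝ) 1 :=
      ⟨inv_nonneg.2 (htpos n).le, inv_le_one_of_one_le₀ (ht1 n)⟩
    have hb := hmax hyI
    have harg : ((((x₀ + (n:ℝ) + 1)⁻¹ : ℝ)):ℂ) = 1/((x₀:ℂ) + (n:ℕ) + 1) := by
      push_cast; rw [one_div]
    simp only [Set.mem_setOf_eq, harg] at hb
    rw [le_div_iff₀ (by linarith [htpos n] : (0:ℝ) < x₀ + (n:ℝ) + 2)]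
    have ht := htpos n
    have h2 : (1 + (x₀ + (n:ℝ) + 1)⁻¹) * (x₀ + (n:ℝ) + 1) = x₀ + (n:ℝ) + 2 := by
      field_simp
      ring
    calc ‖f (1 / ((x₀:ℂ) + (n:ℕ) + 1))‖ * (x₀ + (n:ℝ) + 2)
        = ‖f (1 / ((x₀:ℂ) + (n:ℕ) + 1))‖ * (1 + (x₀ + (n:ℝ) + 1)⁻¹) * (x₀ + (n:ℝ) + 1) := by
          rw [mul_assoc, h2]
      _ ≤ R * (x₀ + (n:ℝ) + 1) := mul_le_mul_of_nonneg_right hb ht.le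
  -- crude bound for summability
  have hfcrude : ∀ n : ℕ, ‖f (1/((x₀:ℂ) + (n:ℕ) + 1))‖ ≤ R := by
    intro n
    refine (hfb n).trans ?_
    rw [div_le_iff₀ (by linarith [htpos n] : (0:ℝ) < x₀ + (n:ℝ) + 2)]
    nlinarith [htpos n, hR]
  -- summability of u
  have hsum_u : Summable u := by
    have h0 : Summable (fun n:ℕ => ((n:ℝ))^(-p)) := Real.summable_nat_rpow.2 (by linarith)
    have h1 : Summable (fun n:ℕ => ((n:ℝ)+1)^(-p)) := by
      have h1' := (summable_nat_add_iff 1).2 h0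
      refine h1'.congr (fun n => ?_)
      push_cast
      ring
    have h2 : Summable (fun n:ℕ => ((n:ℝ)+1)^(-p) * R) := h1.mul_right R
    refine Summable.of_nonneg_of_le (fun n => ?_) (fun n => ?_) h2
    · rw [hu]; positivity
    · rw [hu]
      have hA : (x₀ + (n:ℝ) + 1) ^ (-p) ≤ ((n:ℝ)+1)^(-p) :=
        Real.rpow_le_rpow_of_nonpos (by positivity) (by linarith) (by linarith)
      exact mul_le_mul hA (hfcrude n) (norm_nonneg _) (by positivity)
  -- telescoping sum
  set F : ℕ → ℝ := fun n => (x₀ + (n:ℝ) + 1)⁻¹ with hF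
  have hFlim : Filter.Tendsto F Filter.atTop (nhds 0) := by
    apply Filter.Tendsto.inv_tendsto_atTop
    apply Filter.tendsto_atTop_add_const_right _ 1
    exact Filter.tendsto_atTop_add_const_left _ x₀ tendsto_natCast_atTop_atTop
  have hFanti : ∀ n : ℕ, 0 ≤ F n - F (n+1) := by
    intro n
    have h2 : x₀ + (n:ℝ) + 1 ≤ x₀ + (((n:ℕ)+1:ℕ):ℝ) + 1 := by push_cast; linarith
    simp only [hF]
    exact sub_nonneg.2 (inv_anti₀ (htpos n) h2)
  have key : HasSum (fun n:ℕ => F n - F (n+1)) (F 0) := by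
    rw [hasSum_iff_tendsto_nat_of_nonneg hFanti]
    have hps : ∀ N, ∑ i ∈ Finset.range N, (F i - F (i+1)) = F 0 - F N :=
      fun N => Finset.sum_range_sub' F N
    simp only [hps]
    simpa using tendsto_const_nhds.sub hFlim
  have hbsum : HasSum (fun n:ℕ => (x₀+(n:ℝ)+1)⁻¹ - (x₀+(n:ℝ)+2)⁻¹) ((x₀+1)⁻¹) := by
    have heq : ∀ n:ℕ, F n - F (n+1) = (x₀+(n:ℝ)+1)⁻¹ - (x₀+(n:ℝ)+2)⁻¹ := by
      intro n; simp only [hF]; push_cast; ring_nf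
    have hF0 : F 0 = (x₀+1)⁻¹ := by simp [hF]
    rw [← hF0]
    exact (funext heq) ▸ key
  set b : ℕ → ℝ := fun n => R * ((x₀+(n:ℝ)+1)⁻¹ - (x₀+(n:ℝ)+2)⁻¹) with hbdef
  have hbsum' : HasSum b (R * (x₀+1)⁻¹) := hbsum.mul_left R
  -- pointwise comparison with the telescoping series
  have hmain : ∀ n:ℕ, (x₀+(n:ℝ)+1) ^ (-(2:ℝ)) * (R * (x₀+(n:ℝ)+1) / (x₀+(n:ℝ)+2)) = b n := by
    intro n
    have ht := htpos n
    have h2 : (x₀+(n:ℝ)+1) ^ (-(2:ℝ)) = ((x₀+(n:ℝ)+1)^2)⁻¹ := by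
      rw [Real.rpow_neg ht.le]
      congr 1
      rw [← Real.rpow_natCast (x₀+(n:ℝ)+1) 2]
      norm_num
    have ht2 : (0:ℝ) < x₀ + (n:ℝ) + 2 := by linarith
    rw [hbdef, h2]
    field_simp
    ring
  have hle : ∀ n:ℕ, u n ≤ b n := by
    intro n
    rw [← hmain n, hu]
    have hA : (x₀+(n:ℝ)+1) ^ (-p) ≤ (x₀+(n:ℝ)+1) ^ (-(2:ℝ)) :=
      Real.rpow_le_rpow_of_exponent_le (ht1 n) (by linarith)
    have ht := htpos n
    have ht2 : (0:ℝ) < x₀ + (n:ℝ) + 2 := by linarith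
    have hpos2 : (0:ℝ) ≤ R * (x₀+(n:ℝ)+1) / (x₀+(n:ℝ)+2) := by positivity
    calc (x₀+(n:ℝ)+1) ^ (-p) * ‖f (1/((x₀:ℂ)+(n:ℕ)+1))‖
        ≤ (x₀+(n:ℝ)+1) ^ (-p) * (R * (x₀+(n:ℝ)+1) / (x₀+(n:ℝ)+2)) :=
          mul_le_mul_of_nonneg_left (hfb n) (by positivity)
      _ ≤ (x₀+(n:ℝ)+1) ^ (-(2:ℝ)) * (R * (x₀+(n:ℝ)+1) / (x₀+(n:ℝ)+2)) :=
          mul_le_mul_of_nonneg_right hA hpos2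
  have hslt : u 1 < b 1 := by
    rw [← hmain 1, hu]
    have h1 : (1:ℝ) < x₀ + ((1:ℕ):ℝ) + 1 := by push_cast; linarith
    have hA : (x₀+((1:ℕ):ℝ)+1) ^ (-p) < (x₀+((1:ℕ):ℝ)+1) ^ (-(2:ℝ)) :=
      Real.rpow_lt_rpow_of_exponent_lt h1 (by linarith)
    have ht := htpos 1
    have ht2 : (0:ℝ) < x₀ + ((1:ℕ):ℝ) + 2 := by linarith
    have hpos2 : (0:ℝ) < R * (x₀+((1:ℕ):ℝ)+1) / (x₀+((1:ℕ):ℝ)+2) := by positivity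
    calc (x₀+((1:ℕ):ℝ)+1) ^ (-p) * ‖f (1/((x₀:ℂ)+((1:ℕ):ℂ)+1))‖
        ≤ (x₀+((1:ℕ):ℝ)+1) ^ (-p) * (R * (x₀+((1:ℕ):ℝ)+1) / (x₀+((1:ℕ):ℝ)+2)) :=
          mul_le_mul_of_nonneg_left (hfb 1) (by positivity)
      _ < (x₀+((1:ℕ):ℝ)+1) ^ (-(2:ℝ)) * (R * (x₀+((1:ℕ):ℝ)+1) / (x₀+((1:ℕ):ℝ)+2)) :=
          mul_lt_mul_of_pos_right hA hpos2
  -- put everything together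
  have hsn : Summable (fun n:ℕ => ‖Complex.exp (-(2 * s) * (Real.log (x₀ + (n:ℕ) + 1) : ℂ))
      * f (1 / ((x₀ : ℂ) + (n:ℕ) + 1))‖) := hsum_u.congr (fun n => (hnu n).symm)
  have hnorm : ‖lam‖ * ‖f (x₀:ℂ)‖ ≤ ∑' n, u n := by
    calc ‖lam‖ * ‖f (x₀:ℂ)‖ = ‖lam * f (x₀:ℂ)‖ := (norm_mul _ _).symm
      _ = ‖∑' n:ℕ, Complex.exp (-(2 * s) * (Real.log (x₀ + (n:ℕ) + 1) : ℂ))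
            * f (1 / ((x₀ : ℂ) + (n:ℕ) + 1))‖ := by rw [heig x₀ hx₀I]
      _ ≤ ∑' n:ℕ, ‖Complex.exp (-(2 * s) * (Real.log (x₀ + (n:ℕ) + 1) : ℂ))
            * f (1 / ((x₀ : ℂ) + (n:ℕ) + 1))‖ := norm_tsum_le_tsum_norm hsn
      _ = ∑' n, u n := tsum_congr hnu
  have hlt : ∑' n, u n < ∑' n, b n := Summable.tsum_lt_tsum hle hslt hsum_u hbsum'.summable
  have hfin : ∑' n, b n = R * (x₀+1)⁻¹ := hbsum'.tsum_eq
  have hRx : R * (x₀+1)⁻¹ = ‖f (x₀:ℂ)‖ := by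
    have hne : x₀ + 1 ≠ 0 := by linarith
    calc R * (x₀+1)⁻¹ = ‖f (x₀:ℂ)‖ * ((1+x₀) * (x₀+1)⁻¹) := by rw [hRdef, mul_assoc]
      _ = ‖f (x₀:ℂ)‖ := by
          rw [show (1+x₀) = (x₀+1) by ring, mul_inv_cancel₀ hne, mul_one]
  have hfinal : ‖lam‖ * ‖f (x₀:ℂ)‖ < ‖f (x₀:ℂ)‖ := by
    have h := lt_of_le_of_lt hnorm hlt
    rwa [hfin, hRx] at h
  nlinarith [hfinal, hfx₀, norm_nonneg lam]
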